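/- arXiv:1212.0529 — 3 statements merged into one kernel-verified Lean document; each statement's English description precedes it below -/
import Mathlib

section
/- Let $G_m(x) = \frac{1}{2}\int_0^\infty \frac{1}{u} e^{-\frac{m^2}{2}u - \frac{|x|^2}{2u}}\,du$ be the massive Green function on $\mathbb{R}^2$ and $k_m(z) = \frac{1}{2}\int_0^\infty e^{-\frac{m^2}{2v}|z|^2 - \frac{v}{2}}\,dv$. Then the convolution satisfies $G_m \star G_m(x) = \frac{\pi}{m^2} k_m(x)$ for all $x \in \mathbb{R}^2$. -/
open MeasureTheory

/-- The massive Green function on `ℝ²`. -/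
noncomputable def Gm (m : ℝ) (x : EuclideanSpace ℝ (Fin 2)) : ℝ :=
  ∫ u in Set.Ioi (0 : ℝ), Real.exp (-(m ^ 2 / 2) * u - ‖x‖ ^ 2 / (2 * u)) / (2 * u)

/-- The star-scale invariant kernel associated with the massive Green function. -/
noncomputable def km (m : ℝ) (z : EuclideanSpace ℝ (Fin 2)) : ℝ :=
  (1 / 2) * ∫ v in Set.Ioi (0 : ℝ), Real.exp (-(m ^ 2 / (2 * v)) * ‖z‖ ^ 2 - v / 2)

open MeasureTheory Real Set
open scoped ENNReal

namespace Stmt6Aux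

noncomputable abbrev V2 : Type := EuclideanSpace ℝ (Fin 2)

noncomputable def F (m u : ℝ) (y : V2) : ℝ :=
  rexp (-(m ^ 2 / 2) * u - ‖y‖ ^ 2 / (2 * u)) / (2 * u)

lemma measurable_F (m : ℝ) : Measurable fun p : ℝ × V2 => F m p.1 p.2 := by
  unfold F; fun_prop

lemma F_nonneg (m : ℝ) {u : ℝ} (hu : 0 < u) (y : V2) : 0 ≤ F m u y :=
  le_of_lt (div_pos (exp_pos _) (by linarith))

lemma gauss2 {b : ℝ} (hb : 0 < b) : ∫ y : V2, rexp (-b * ‖y‖ ^ 2) = π / b := by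
  rw [GaussianFourier.integral_rexp_neg_mul_sq_norm hb, finrank_euclideanSpace_fin]
  norm_num

lemma gauss2_int {b : ℝ} (hb : 0 < b) : Integrable fun y : V2 => rexp (-b * ‖y‖ ^ 2) := by
  have := GaussianFourier.integrable_cexp_neg_mul_sq_norm_add (V := V2) (b := (b : ℂ))
    (by simpa) 0 0
  apply this.norm.congr
  filter_upwards with v
  simp [Complex.norm_exp]
  left; norm_cast

lemma sq_complete (u v : ℝ) (hu : 0 < u) (hv : 0 < v) (x y : V2) :
    -(‖y‖ ^ 2 / (2 * u)) - ‖x - y‖ ^ 2 / (2 * v) =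
      -((u + v) / (2 * u * v)) * ‖y - (u / (u + v)) • x‖ ^ 2 - ‖x‖ ^ 2 / (2 * (u + v)) := by
  have huv : 0 < u + v := by linarith
  rw [norm_sub_sq_real, norm_sub_sq_real, norm_smul, real_inner_smul_right,
    real_inner_comm x y]
  simp only [Real.norm_eq_abs, abs_of_pos (by positivity : (0:ℝ) < u / (u + v)), mul_pow]
  field_simp
  ring

lemma F_prod_eq (m : ℝ) {u v : ℝ} (hu : 0 < u) (hv : 0 < v) (x y : V2) :
    F m u y * F m v (x - y) =
      rexp (-(m ^ 2 / 2) * (u + v) - ‖x‖ ^ 2 / (2 * (u + v))) / (4 * (u * v)) *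
        rexp (-((u + v) / (2 * u * v)) * ‖y - (u / (u + v)) • x‖ ^ 2) := by
  unfold F
  rw [div_mul_div_comm, ← Real.exp_add, div_mul_eq_mul_div, ← Real.exp_add]
  have h := sq_complete u v hu hv x y
  rw [show -(m ^ 2 / 2) * u - ‖y‖ ^ 2 / (2 * u) + (-(m ^ 2 / 2) * v - ‖x - y‖ ^ 2 / (2 * v)) =
      -(m ^ 2 / 2) * (u + v) + (-(‖y‖ ^ 2 / (2 * u)) - ‖x - y‖ ^ 2 / (2 * v)) by ring, h]
  rw [show -(m ^ 2 / 2) * (u + v) +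
      (-((u + v) / (2 * u * v)) * ‖y - (u / (u + v)) • x‖ ^ 2 - ‖x‖ ^ 2 / (2 * (u + v))) =
      -(m ^ 2 / 2) * (u + v) - ‖x‖ ^ 2 / (2 * (u + v)) +
        -((u + v) / (2 * u * v)) * ‖y - (u / (u + v)) • x‖ ^ 2 by ring]
  congr 1
  ring

lemma conv_int (m : ℝ) {u v : ℝ} (hu : 0 < u) (hv : 0 < v) (x : V2) :
    Integrable fun y : V2 => F m u y * F m v (x - y) := by
  have hK : 0 < (u + v) / (2 * u * v) := by positivity
  have h1 : Integrable fun y : V2 =>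
      rexp (-((u + v) / (2 * u * v)) * ‖y - (u / (u + v)) • x‖ ^ 2) :=
    (gauss2_int hK).comp_sub_right _
  refine (h1.const_mul
    (rexp (-(m ^ 2 / 2) * (u + v) - ‖x‖ ^ 2 / (2 * (u + v))) / (4 * (u * v)))).congr ?_
  filter_upwards with y
  rw [F_prod_eq m hu hv x y]

lemma conv_eval (m : ℝ) {u v : ℝ} (hu : 0 < u) (hv : 0 < v) (x : V2) :
    ∫ y : V2, F m u y * F m v (x - y) =
      π / 2 * (rexp (-(m ^ 2 / 2) * (u + v) - ‖x‖ ^ 2 / (2 * (u + v))) / (u + v)) := by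
  have hK : 0 < (u + v) / (2 * u * v) := by positivity
  have huv : 0 < u + v := by linarith
  simp_rw [F_prod_eq m hu hv x]
  rw [integral_const_mul,
    integral_sub_right_eq_self (fun y : V2 => rexp (-((u + v) / (2 * u * v)) * ‖y‖ ^ 2)) _,
    gauss2 hK]
  field_simp
  ring

lemma exp_neg_le_inv {s : ℝ} (hs : 0 < s) : rexp (-s) ≤ s⁻¹ := by
  rw [Real.exp_neg]
  exact inv_anti₀ hs (by linarith [Real.add_one_le_exp s])

lemma F_integrableOn (m : ℝ) (hm : 0 < m) {y : V2} (hy : y ≠ 0) :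
    IntegrableOn (fun u => F m u y) (Ioi 0) := by
  have hny : (0:ℝ) < ‖y‖ ^ 2 := by
    have : ‖y‖ ≠ 0 := norm_ne_zero_iff.mpr hy
    positivity
  have hg : IntegrableOn (fun u => rexp (-(m ^ 2 / 2) * u) / ‖y‖ ^ 2) (Ioi 0) :=
    (exp_neg_integrableOn_Ioi 0 (by positivity : (0:ℝ) < m ^ 2 / 2)).div_const _
  apply Integrable.mono hg
  · exact ((measurable_F m).comp (measurable_id.prodMk measurable_const)
      |>.aestronglyMeasurable).restrict
  · filter_upwards [ae_restrict_mem measurableSet_Ioi] with u hu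
    rw [mem_Ioi] at hu
    have h2u : (0:ℝ) < 2 * u := by linarith
    have hF : F m u y = rexp (-(m ^ 2 / 2) * u) * rexp (-(‖y‖ ^ 2 / (2 * u))) / (2 * u) := by
      unfold F; rw [← Real.exp_add]; ring_nf
    rw [Real.norm_eq_abs, Real.norm_eq_abs, abs_of_nonneg (F_nonneg m hu y),
      abs_of_nonneg (by positivity)]
    rw [hF]
    have hb : rexp (-(‖y‖ ^ 2 / (2 * u))) ≤ (‖y‖ ^ 2 / (2 * u))⁻¹ :=
      exp_neg_le_inv (by positivity)
    calc rexp (-(m ^ 2 / 2) * u) * rexp (-(‖y‖ ^ 2 / (2 * u))) / (2 * u)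
        ≤ rexp (-(m ^ 2 / 2) * u) * (‖y‖ ^ 2 / (2 * u))⁻¹ / (2 * u) := by
          gcongr
      _ = rexp (-(m ^ 2 / 2) * u) / ‖y‖ ^ 2 := by
          field_simp
  
lemma I2_integrableOn (m : ℝ) (hm : 0 < m) (x : V2) :
    IntegrableOn (fun s => rexp (-(m ^ 2 / 2) * s - ‖x‖ ^ 2 / (2 * s))) (Ioi 0) := by
  apply Integrable.mono (exp_neg_integrableOn_Ioi 0 (by positivity : (0:ℝ) < m ^ 2 / 2))
  · apply Measurable.aestronglyMeasurable
    fun_prop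
  · filter_upwards [ae_restrict_mem measurableSet_Ioi] with s hs
    rw [mem_Ioi] at hs
    rw [Real.norm_eq_abs, Real.norm_eq_abs, abs_of_nonneg (Real.exp_nonneg _),
      abs_of_nonneg (Real.exp_nonneg _)]
    apply Real.exp_le_exp.mpr
    have : 0 ≤ ‖x‖ ^ 2 / (2 * s) := by positivity
    linarith

end Stmt6Aux

open MeasureTheory Stmt6Aux
open scoped ENNReal

/-- The massive Green function is a square-root convolution of `k_m`:
`G_m ⋆ G_m = (π/m²) k_m`. -/
theorem stmt6 (m : ℝ) (hm : 0 < m) (x : EuclideanSpace ℝ (Fin 2)) :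
    ∫ y, Gm m y * Gm m (x - y) = (Real.pi / m ^ 2) * km m x := by
  classical
  have hF := measurable_F m
  set L : V2 → ℝ≥0∞ := fun y => ∫⁻ u in Set.Ioi 0, ENNReal.ofReal (F m u y) with hLdef
  have hFy : ∀ y : V2, Measurable fun u => ENNReal.ofReal (F m u y) := fun y =>
    (hF.comp (measurable_id.prodMk measurable_const)).ennreal_ofReal
  have hFu : ∀ u : ℝ, Measurable fun y : V2 => ENNReal.ofReal (F m u y) := fun u =>
    (hF.comp (measurable_const.prodMk measurable_id)).ennreal_ofReal
  have hL : Measurable L := by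
    apply Measurable.lintegral_prod_right
    exact (hF.comp measurable_swap).ennreal_ofReal
  have hGm : ∀ y : V2, Gm m y = (L y).toReal := by
    intro y
    exact integral_eq_lintegral_of_nonneg_ae
      (by filter_upwards [ae_restrict_mem measurableSet_Ioi] with u hu
          exact F_nonneg m hu y)
      ((hF.comp (measurable_id.prodMk measurable_const)).aestronglyMeasurable).restrict
  have hLfin : ∀ y : V2, y ≠ 0 → L y < ⊤ := by
    intro y hy
    show (∫⁻ u in Set.Ioi 0, ENNReal.ofReal (F m u y)) < ⊤
    rw [← ofReal_integral_eq_lintegral_ofReal (F_integrableOn m hm hy)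
      (by filter_upwards [ae_restrict_mem measurableSet_Ioi] with u hu
          exact F_nonneg m hu y)]
    exact ENNReal.ofReal_lt_top
  have hmul : AEMeasurable (fun y : V2 => L y * L (x - y)) :=
    (hL.mul (hL.comp (measurable_const.sub measurable_id))).aemeasurable
  have hae : ∀ᵐ y : V2, L y * L (x - y) < ⊤ := by
    rw [ae_iff]
    refine measure_mono_null (?_ : _ ⊆ ({0, x} : Set V2)) ?_
    · intro y hy
      simp only [not_lt, Set.mem_setOf_eq] at hy
      by_contra hmem
      simp only [Set.mem_insert_iff, Set.mem_singleton_iff, not_or] at hmem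
      obtain ⟨h1, h2⟩ := hmem
      have hfin := ENNReal.mul_lt_top (hLfin y h1)
        (hLfin (x - y) (sub_ne_zero.mpr (Ne.symm h2)))
      exact absurd hy (not_le.mpr hfin)
    · rw [Set.insert_eq]
      exact measure_union_null (measure_singleton _) (measure_singleton _)
  have key1 : ∫ y, Gm m y * Gm m (x - y) = (∫⁻ y, L y * L (x - y)).toReal := by
    simp_rw [hGm, ← ENNReal.toReal_mul]
    exact integral_toReal hmul hae
  -- inner double integral
  set H : ℝ → ℝ≥0∞ := fun s =>
    ENNReal.ofReal (π / 2 * (rexp (-(m ^ 2 / 2) * s - ‖x‖ ^ 2 / (2 * s)) / s)) with hHdef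
  have hHm : Measurable H := by
    apply Measurable.ennreal_ofReal
    fun_prop
  have key2 : ∫⁻ y, L y * L (x - y) =
      ∫⁻ u in Set.Ioi 0, ∫⁻ v in Set.Ioi 0, H (u + v) := by
    calc ∫⁻ y, L y * L (x - y)
        = ∫⁻ y, ∫⁻ u in Set.Ioi 0, ENNReal.ofReal (F m u y) * L (x - y) := by
          refine lintegral_congr fun y => ?_
          exact (lintegral_mul_const _ (hFy y)).symm
      _ = ∫⁻ u in Set.Ioi 0, ∫⁻ y, ENNReal.ofReal (F m u y) * L (x - y) := by
          apply lintegral_lintegral_swap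
          exact (((hF.comp measurable_swap).ennreal_ofReal).mul
            ((hL.comp (measurable_const.sub measurable_fst)))).aemeasurable
      _ = ∫⁻ u in Set.Ioi 0, ∫⁻ v in Set.Ioi 0, ∫⁻ y,
            ENNReal.ofReal (F m u y) * ENNReal.ofReal (F m v (x - y)) := by
          refine lintegral_congr fun u => ?_
          calc ∫⁻ y, ENNReal.ofReal (F m u y) * L (x - y)
              = ∫⁻ y, ∫⁻ v in Set.Ioi 0,
                  ENNReal.ofReal (F m u y) * ENNReal.ofReal (F m v (x - y)) := by
                refine lintegral_congr fun y => ?_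
                exact (lintegral_const_mul _
                  ((hF.comp (measurable_id.prodMk measurable_const)).ennreal_ofReal)).symm
            _ = ∫⁻ v in Set.Ioi 0, ∫⁻ y,
                  ENNReal.ofReal (F m u y) * ENNReal.ofReal (F m v (x - y)) := by
                apply lintegral_lintegral_swap
                apply Measurable.aemeasurable
                refine Measurable.mul (f := fun p : V2 × ℝ => ENNReal.ofReal (F m u p.1))
                  (g := fun p : V2 × ℝ => ENNReal.ofReal (F m p.2 (x - p.1))) ?_ ?_
                · exact ((hF.comp (measurable_const.prodMk measurable_fst)).ennreal_ofReal)
                · exact ((hF.comp (measurable_snd.prodMk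
                    (measurable_const.sub measurable_fst))).ennreal_ofReal)
      _ = ∫⁻ u in Set.Ioi 0, ∫⁻ v in Set.Ioi 0, H (u + v) := by
          refine setLIntegral_congr_fun measurableSet_Ioi (fun u hu => ?_)
          refine setLIntegral_congr_fun measurableSet_Ioi (fun v hv => ?_)
          rw [Set.mem_Ioi] at hu hv
          have huv : (0:ℝ) < u + v := by linarith
          calc ∫⁻ y, ENNReal.ofReal (F m u y) * ENNReal.ofReal (F m v (x - y))
              = ∫⁻ y, ENNReal.ofReal (F m u y * F m v (x - y)) := by
                refine lintegral_congr fun y => ?_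
                rw [ENNReal.ofReal_mul (F_nonneg m hu y)]
            _ = ENNReal.ofReal (∫ y, F m u y * F m v (x - y)) := by
                rw [← ofReal_integral_eq_lintegral_ofReal (conv_int m hu hv x)]
                filter_upwards with y
                exact mul_nonneg (F_nonneg m hu y) (F_nonneg m hv (x - y))
            _ = H (u + v) := by rw [conv_eval m hu hv x, hHdef]
  have key3 : ∫⁻ u in Set.Ioi 0, ∫⁻ v in Set.Ioi 0, H (u + v) =
      ∫⁻ s in Set.Ioi 0, ENNReal.ofReal
        (π / 2 * rexp (-(m ^ 2 / 2) * s - ‖x‖ ^ 2 / (2 * s))) := by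
    calc ∫⁻ u in Set.Ioi 0, ∫⁻ v in Set.Ioi 0, H (u + v)
        = ∫⁻ u in Set.Ioi 0, ∫⁻ s in Set.Ioi 0, (Set.Ioi u).indicator H s := by
          refine setLIntegral_congr_fun measurableSet_Ioi (fun u hu => ?_)
          rw [Set.mem_Ioi] at hu
          calc ∫⁻ v in Set.Ioi 0, H (u + v)
              = ∫⁻ v, (Set.Ioi 0).indicator (fun v => H (u + v)) v := by
                rw [lintegral_indicator measurableSet_Ioi]
            _ = ∫⁻ v, (Set.Ioi u).indicator H (u + v) := by
                refine lintegral_congr fun v => ?_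
                by_cases h : (0:ℝ) < v
                · rw [Set.indicator_of_mem (Set.mem_Ioi.mpr h),
                    Set.indicator_of_mem (Set.mem_Ioi.mpr (by linarith))]
                · rw [Set.indicator_of_notMem (by simpa using h),
                    Set.indicator_of_notMem (by simp; linarith)]
            _ = ∫⁻ s, (Set.Ioi u).indicator H s := lintegral_add_left_eq_self _ u
            _ = ∫⁻ s in Set.Ioi 0, (Set.Ioi u).indicator H s := by
                rw [← lintegral_indicator measurableSet_Ioi, Set.indicator_indicator,
                  Set.Ioi_inter_Ioi, max_eq_right hu.le]
      _ = ∫⁻ s in Set.Ioi 0, ∫⁻ u in Set.Ioi 0, (Set.Ioi u).indicator H s := by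
          apply lintegral_lintegral_swap
          apply Measurable.aemeasurable
          have huncurry : Function.uncurry (fun (u : ℝ) => (Set.Ioi u).indicator H) =
              fun p : ℝ × ℝ => if p.1 < p.2 then H p.2 else 0 := by
            funext p
            simp [Function.uncurry, Set.indicator_apply, Set.mem_Ioi]
          rw [huncurry]
          exact Measurable.ite (measurableSet_lt measurable_fst measurable_snd)
            (hHm.comp measurable_snd) measurable_const
      _ = ∫⁻ s in Set.Ioi 0, H s * ENNReal.ofReal s := by
          refine setLIntegral_congr_fun measurableSet_Ioi (fun s hs => ?_)
          rw [Set.mem_Ioi] at hs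
          calc ∫⁻ u in Set.Ioi 0, (Set.Ioi u).indicator H s
              = ∫⁻ u in Set.Ioi 0, (Set.Iio s).indicator (fun _ => H s) u := by
                refine lintegral_congr fun u => ?_
                by_cases h : u < s
                · rw [Set.indicator_of_mem (Set.mem_Ioi.mpr h),
                    Set.indicator_of_mem (Set.mem_Iio.mpr h)]
                · rw [Set.indicator_of_notMem (by simpa using h),
                    Set.indicator_of_notMem (by simpa using h)]
            _ = ∫⁻ u in Set.Iio s, (fun _ => H s) u ∂(volume.restrict (Set.Ioi 0)) := by
                rw [lintegral_indicator measurableSet_Iio]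
            _ = H s * volume (Set.Iio s ∩ Set.Ioi 0) := by
                rw [setLIntegral_const, Measure.restrict_apply measurableSet_Iio]
            _ = H s * ENNReal.ofReal s := by
                rw [show Set.Iio s ∩ Set.Ioi 0 = Set.Ioo 0 s by
                    ext t; simp [Set.mem_Ioo, and_comm], Real.volume_Ioo, sub_zero]
      _ = ∫⁻ s in Set.Ioi 0, ENNReal.ofReal
            (π / 2 * rexp (-(m ^ 2 / 2) * s - ‖x‖ ^ 2 / (2 * s))) := by
          refine setLIntegral_congr_fun measurableSet_Ioi (fun s hs => ?_)
          rw [Set.mem_Ioi] at hs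
          rw [hHdef]
          rw [← ENNReal.ofReal_mul (by positivity)]
          congr 1
          field_simp
  rw [key1, key2, key3]
  rw [← ofReal_integral_eq_lintegral_ofReal ((I2_integrableOn m hm x).const_mul _)
    (by filter_upwards with s using by positivity)]
  rw [ENNReal.toReal_ofReal (by
    apply integral_nonneg
    intro s
    positivity)]
  rw [integral_const_mul]
  -- change of variables s = v / m²
  have hcongr : ∫ v in Set.Ioi (0:ℝ),
      rexp (-(m ^ 2 / 2) * ((m ^ 2)⁻¹ * v) - ‖x‖ ^ 2 / (2 * ((m ^ 2)⁻¹ * v))) =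
      ∫ v in Set.Ioi (0:ℝ), rexp (-(m ^ 2 / (2 * v)) * ‖x‖ ^ 2 - v / 2) := by
    refine setIntegral_congr_fun measurableSet_Ioi fun v hv => ?_
    rw [Set.mem_Ioi] at hv
    congr 1
    have hm0 : m ^ 2 ≠ 0 := by positivity
    field_simp
    ring
  have hsub := integral_comp_mul_left_Ioi
    (fun s => rexp (-(m ^ 2 / 2) * s - ‖x‖ ^ 2 / (2 * s))) 0
    (by positivity : (0:ℝ) < (m ^ 2)⁻¹)
  rw [mul_zero, inv_inv, smul_eq_mul] at hsub
  beta_reduce at hsub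
  rw [hcongr] at hsub
  have hJ : ∫ s in Set.Ioi (0:ℝ), rexp (-(m ^ 2 / 2) * s - ‖x‖ ^ 2 / (2 * s)) =
      (m ^ 2)⁻¹ * ∫ v in Set.Ioi (0:ℝ), rexp (-(m ^ 2 / (2 * v)) * ‖x‖ ^ 2 - v / 2) := by
    rw [hsub, inv_mul_cancel_left₀ (by positivity : (m:ℝ) ^ 2 ≠ 0)]
  rw [hJ, km]
  ring
end

section
/- The massive Green function kernel on $\mathbb{R}^2$, $G_m(x) = \int_0^\infty e^{-\frac{m^2}{2}u - \frac{|x|^2}{2u}}\frac{du}{2u}$, can be written as a star-scale invariant kernel: $G_m(x) = \int_1^\infty \frac{k_m(u x)}{u}\,du$ where $k_m(z) = \frac{1}{2}\int_0^\infty e^{-\frac{m^2}{2v}|z|^2 - \frac{v}{2}}\,dv$. In particular $k_m(0)=1$. -/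
open MeasureTheory

open MeasureTheory Set Filter

namespace Stmt7Aux

/-- The inner two-variable function. -/
noncomputable def F (c a u s : ℝ) : ℝ :=
  (c * u / 2) * Real.exp (-(a / (2 * s)) - c * u ^ 2 * s / 2)

lemma F_meas (c a : ℝ) : Measurable (fun p : ℝ × ℝ => F c a p.1 p.2) := by
  unfold F; fun_prop

lemma F_nonneg {c : ℝ} (hc : 0 < c) {u : ℝ} (hu : 0 < u) (a s : ℝ) : 0 ≤ F c a u s :=
  mul_nonneg (by positivity) (Real.exp_pos _).le

lemma hasDeriv {c : ℝ} (a : ℝ) {s : ℝ} (hs : 0 < s) (u : ℝ) :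
    HasDerivAt (fun u : ℝ => -Real.exp (-(a / (2 * s)) - c * u ^ 2 * s / 2) / (2 * s))
      (F c a u s) u := by
  have h1 : HasDerivAt (fun u : ℝ => -(a / (2 * s)) - c * u ^ 2 * s / 2)
      (-(c * (2 * u ^ 1) * s / 2)) u := by
    exact (((hasDerivAt_pow 2 u).const_mul c).mul_const s |>.div_const 2).const_sub _
  have h2 := (h1.exp.neg.div_const (2 * s))
  refine h2.congr_deriv ?_
  unfold F
  field_simp

lemma tendsto_aux {c : ℝ} (hc : 0 < c) (a : ℝ) {s : ℝ} (hs : 0 < s) :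
    Tendsto (fun u : ℝ => -Real.exp (-(a / (2 * s)) - c * u ^ 2 * s / 2) / (2 * s))
      atTop (nhds 0) := by
  have h0 : Tendsto (fun u : ℝ => c * u ^ 2 * s / 2) atTop atTop := by
    apply Tendsto.atTop_div_const two_pos
    exact ((tendsto_pow_atTop two_ne_zero).const_mul_atTop hc).atTop_mul_const hs
  have hneg : Tendsto (fun u : ℝ => -(c * u ^ 2 * s / 2)) atTop atBot :=
    tendsto_neg_atTop_atBot.comp h0
  have h1 : Tendsto (fun u : ℝ => -(a / (2 * s)) - c * u ^ 2 * s / 2) atTop atBot := by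
    simpa [sub_eq_add_neg] using tendsto_atBot_add_const_left atTop (-(a / (2 * s))) hneg
  have h2 : Tendsto (fun u : ℝ => Real.exp (-(a / (2 * s)) - c * u ^ 2 * s / 2)) atTop (nhds 0) :=
    Real.tendsto_exp_atBot.comp h1
  simpa using (h2.neg.div_const (2 * s))

lemma integrableB {c : ℝ} (hc : 0 < c) (a : ℝ) {s : ℝ} (hs : 0 < s) :
    IntegrableOn (fun u : ℝ => F c a u s) (Ioi (1 : ℝ)) := by
  refine integrableOn_Ioi_deriv_of_nonneg' (fun u _ => hasDeriv a hs u)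
    (fun u hu => F_nonneg hc (lt_trans one_pos hu) a s) (tendsto_aux hc a hs)

lemma integralB {c : ℝ} (hc : 0 < c) (a : ℝ) {s : ℝ} (hs : 0 < s) :
    ∫ u in Ioi (1 : ℝ), F c a u s = Real.exp (-(a / (2 * s)) - c * s / 2) / (2 * s) := by
  rw [integral_Ioi_of_hasDerivAt_of_nonneg' (fun u _ => hasDeriv a hs u)
    (fun u hu => F_nonneg hc (lt_trans one_pos hu) a s) (tendsto_aux hc a hs)]
  norm_num
  ring

lemma intG {c a : ℝ} (hc : 0 < c) (ha : 0 < a) :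
    IntegrableOn (fun s : ℝ => Real.exp (-(a / (2 * s)) - c * s / 2) / (2 * s))
      (Ioi (0 : ℝ)) := by
  have hdom : IntegrableOn (fun s : ℝ => a⁻¹ * Real.exp (-(c / 2) * s)) (Ioi (0 : ℝ)) :=
    (exp_neg_integrableOn_Ioi 0 (by positivity)).const_mul _
  have hmeas : Measurable (fun s : ℝ => Real.exp (-(a / (2 * s)) - c * s / 2) / (2 * s)) := by
    apply Measurable.div
    · exact Real.measurable_exp.comp
        (((measurable_const.div (measurable_id'.const_mul 2)).neg).sub
          ((measurable_id'.const_mul c).div_const 2))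
    · exact measurable_id'.const_mul 2
  refine hdom.mono' hmeas.aestronglyMeasurable ?_
  filter_upwards [ae_restrict_mem measurableSet_Ioi] with s hs
  rw [mem_Ioi] at hs
  rw [Real.norm_eq_abs, abs_of_nonneg (by positivity)]
  have key : Real.exp (-(a / (2 * s))) / (2 * s) ≤ a⁻¹ := by
    have h1 : a / (2 * s) ≤ Real.exp (a / (2 * s)) := by
      have := Real.add_one_le_exp (a / (2 * s)); linarith
    have h2 : a ≤ Real.exp (a / (2 * s)) * (2 * s) := (div_le_iff₀ (by positivity)).mp h1
    have h3 : (Real.exp (a / (2 * s)) * (2 * s))⁻¹ ≤ a⁻¹ := inv_anti₀ ha h2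
    calc Real.exp (-(a / (2 * s))) / (2 * s)
        = (Real.exp (a / (2 * s)) * (2 * s))⁻¹ := by
          rw [Real.exp_neg, mul_inv, div_eq_mul_inv]
      _ ≤ a⁻¹ := h3
  calc Real.exp (-(a / (2 * s)) - c * s / 2) / (2 * s)
      = Real.exp (-(c / 2) * s) * (Real.exp (-(a / (2 * s))) / (2 * s)) := by
        rw [show -(a / (2 * s)) - c * s / 2 = (-(c / 2) * s) + (-(a / (2 * s))) by ring,
          Real.exp_add, mul_div_assoc]
    _ ≤ Real.exp (-(c / 2) * s) * a⁻¹ :=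
        mul_le_mul_of_nonneg_left key (Real.exp_pos _).le
    _ = a⁻¹ * Real.exp (-(c / 2) * s) := mul_comm _ _

lemma F_int {c a : ℝ} (hc : 0 < c) (ha : 0 < a) :
    Integrable (fun p : ℝ × ℝ => F c a p.1 p.2)
      ((volume.restrict (Ioi (1 : ℝ))).prod (volume.restrict (Ioi (0 : ℝ)))) := by
  rw [integrable_prod_iff' (F_meas c a).aestronglyMeasurable]
  constructor
  · filter_upwards [ae_restrict_mem measurableSet_Ioi] with s hs
    exact integrableB hc a hs
  · apply (intG hc ha).congr
    filter_upwards [ae_restrict_mem measurableSet_Ioi] with s hs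
    rw [mem_Ioi] at hs
    rw [← integralB hc a hs]
    refine (setIntegral_congr_fun measurableSet_Ioi (fun u hu => ?_)).symm
    exact Real.norm_of_nonneg (F_nonneg hc (lt_trans one_pos hu) a s)

lemma swapF {c a : ℝ} (hc : 0 < c) (ha : 0 < a) :
    ∫ u in Ioi (1 : ℝ), ∫ s in Ioi (0 : ℝ), F c a u s
      = ∫ s in Ioi (0 : ℝ), ∫ u in Ioi (1 : ℝ), F c a u s :=
  integral_integral_swap (F_int hc ha)

lemma subst_inner (a : ℝ) {b : ℝ} (hb : 0 < b) :
    ∫ v in Ioi (0 : ℝ), Real.exp (-(b * a) / (2 * v) - v / 2)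
      = b * ∫ s in Ioi (0 : ℝ), Real.exp (-(a / (2 * s)) - b * s / 2) := by
  have h := integral_comp_mul_left_Ioi
    (fun v : ℝ => Real.exp (-(b * a) / (2 * v) - v / 2)) 0 hb
  rw [mul_zero] at h
  have e : EqOn (fun s : ℝ => Real.exp (-(b * a) / (2 * (b * s)) - b * s / 2))
      (fun s : ℝ => Real.exp (-(a / (2 * s)) - b * s / 2)) (Ioi (0 : ℝ)) := by
    intro s hs
    rw [mem_Ioi] at hs
    show Real.exp _ = Real.exp _
    congr 1
    have hb' := hb.ne'
    field_simp
  rw [setIntegral_congr_fun measurableSet_Ioi e] at h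
  rw [h, smul_eq_mul, ← mul_assoc, mul_inv_cancel₀ hb.ne', one_mul]

end Stmt7Aux

open Stmt7Aux

/-- The massive Green function is a star-scale invariant kernel:
`G_m(x) = ∫_1^∞ k_m(u x)/u du`, and `k_m(0) = 1`. -/
theorem stmt7 (m : ℝ) (hm : 0 < m) :
    (∀ x : EuclideanSpace ℝ (Fin 2),
      Gm m x = ∫ u in Set.Ioi (1 : ℝ), km m (u • x) / u) ∧ km m 0 = 1 := by
  have hc : 0 < m ^ 2 := by positivity
  have hkm0 : km m 0 = 1 := by
    rw [km]
    simp only [norm_zero, ne_eq, OfNat.ofNat_ne_zero, not_false_eq_true, zero_pow,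
      mul_zero, zero_sub]
    have e : (fun v : ℝ => Real.exp (-(v / 2))) = fun v => Real.exp (-(2⁻¹ * v)) := by
      funext v; ring_nf
    rw [e]
    have h := integral_comp_mul_left_Ioi (fun t : ℝ => Real.exp (-t)) 0
      (by norm_num : (0 : ℝ) < 2⁻¹)
    rw [mul_zero] at h
    rw [h, smul_eq_mul, integral_exp_neg_Ioi_zero]
    norm_num
  refine ⟨fun x => ?_, hkm0⟩
  by_cases hx : x = 0
  · subst hx
    have hnotL : ¬ IntegrableOn
        (fun u : ℝ => Real.exp (-(m ^ 2 / 2) * u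
          - ‖(0 : EuclideanSpace ℝ (Fin 2))‖ ^ 2 / (2 * u)) / (2 * u)) (Ioi (0 : ℝ)) := by
      intro h
      have h1 : IntegrableOn
          (fun u : ℝ => Real.exp (-(m ^ 2 / 2) * u
            - ‖(0 : EuclideanSpace ℝ (Fin 2))‖ ^ 2 / (2 * u)) / (2 * u)) (Ioc (0 : ℝ) 1) :=
        h.mono Ioc_subset_Ioi_self le_rfl
      have h2 : IntegrableOn (fun u : ℝ => u⁻¹) (Ioc (0 : ℝ) 1) := by
        refine (h1.const_mul (2 * Real.exp (m ^ 2 / 2))).mono'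
          measurable_inv.aestronglyMeasurable ?_
        filter_upwards [ae_restrict_mem measurableSet_Ioc] with u hu
        have hu0 : 0 < u := hu.1
        rw [norm_inv, Real.norm_eq_abs, abs_of_pos hu0]
        simp only [norm_zero, ne_eq, OfNat.ofNat_ne_zero, not_false_eq_true, zero_pow,
          zero_div, sub_zero]
        have hexp : 1 ≤ Real.exp (m ^ 2 / 2) * Real.exp (-(m ^ 2 / 2) * u) := by
          rw [← Real.exp_add]
          refine Real.one_le_exp ?_
          nlinarith [hu.2, sq_nonneg m]
        calc u⁻¹ = 1 / u := (one_div u).symm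
          _ ≤ (Real.exp (m ^ 2 / 2) * Real.exp (-(m ^ 2 / 2) * u)) / u := by gcongr
          _ = 2 * Real.exp (m ^ 2 / 2) * (Real.exp (-(m ^ 2 / 2) * u) / (2 * u)) := by
              field_simp
      have h3 : IntervalIntegrable (fun u : ℝ => u⁻¹) volume 0 1 :=
        (intervalIntegrable_iff_integrableOn_Ioc_of_le zero_le_one).mpr h2
      rw [intervalIntegrable_inv_iff] at h3
      simp at h3
    have hnotR : ¬ IntegrableOn (fun u : ℝ => u⁻¹) (Ioi (1 : ℝ)) := not_IntegrableOn_Ioi_inv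
    have eR : EqOn (fun u : ℝ => km m (u • (0 : EuclideanSpace ℝ (Fin 2))) / u)
        (fun u : ℝ => u⁻¹) (Ioi (1 : ℝ)) := by
      intro u _
      simp only [smul_zero, hkm0, one_div]
    rw [Gm, setIntegral_congr_fun measurableSet_Ioi eR, integral_undef hnotL,
      integral_undef hnotR]
  · -- x ≠ 0
    have ha : 0 < ‖x‖ ^ 2 := by
      have : 0 < ‖x‖ := norm_pos_iff.mpr hx
      positivity
    have claimA : EqOn (fun u : ℝ => km m (u • x) / u)
        (fun u : ℝ => ∫ s in Ioi (0 : ℝ), F (m ^ 2) (‖x‖ ^ 2) u s) (Ioi (1 : ℝ)) := by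
      intro u hu
      rw [mem_Ioi] at hu
      have hu0 : 0 < u := lt_trans one_pos hu
      have hb : 0 < m ^ 2 * u ^ 2 := by positivity
      have hnorm : ‖u • x‖ ^ 2 = u ^ 2 * ‖x‖ ^ 2 := by
        rw [norm_smul, mul_pow, Real.norm_eq_abs, sq_abs]
      have einner : (fun v : ℝ => Real.exp (-(m ^ 2 / (2 * v)) * ‖u • x‖ ^ 2 - v / 2))
          = fun v : ℝ => Real.exp (-((m ^ 2 * u ^ 2) * ‖x‖ ^ 2) / (2 * v) - v / 2) := by
        funext v
        rw [hnorm]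
        show Real.exp _ = Real.exp _
        congr 1
        by_cases hv : v = 0
        · simp [hv]
        · field_simp
      show km m (u • x) / u = ∫ s in Ioi (0 : ℝ), F (m ^ 2) (‖x‖ ^ 2) u s
      rw [km, einner, subst_inner (‖x‖ ^ 2) hb]
      have hF : (fun s : ℝ => F (m ^ 2) (‖x‖ ^ 2) u s)
          = fun s : ℝ =>
            (m ^ 2 * u / 2) * Real.exp (-(‖x‖ ^ 2 / (2 * s)) - (m ^ 2 * u ^ 2) * s / 2) := by
        funext s; unfold F; ring_nf
      rw [hF, integral_const_mul]
      field_simp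
    rw [setIntegral_congr_fun measurableSet_Ioi claimA, swapF hc ha]
    have claimB : EqOn (fun s : ℝ => ∫ u in Ioi (1 : ℝ), F (m ^ 2) (‖x‖ ^ 2) u s)
        (fun s : ℝ => Real.exp (-(m ^ 2 / 2) * s - ‖x‖ ^ 2 / (2 * s)) / (2 * s))
        (Ioi (0 : ℝ)) := by
      intro s hs
      rw [mem_Ioi] at hs
      show (∫ u in Ioi (1 : ℝ), F (m ^ 2) (‖x‖ ^ 2) u s)
          = Real.exp (-(m ^ 2 / 2) * s - ‖x‖ ^ 2 / (2 * s)) / (2 * s)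
      rw [integralB hc (‖x‖ ^ 2) hs]
      show Real.exp _ / _ = Real.exp _ / _
      congr 2
      ring
    rw [setIntegral_congr_fun measurableSet_Ioi claimB, Gm]
end

section
/- Let $\varphi : \mathbb{R}_+ \to (0,1]$ be a function satisfying: there exist $s_0 > 0$ and $q, Q > 0$ with $Q \ge \frac{1+\sqrt 5}{2}$ such that $\varphi(s) \le \frac{1}{\sqrt 2}(s^{-2q} + \varphi(s^{1/2})^2)$ for all $s > s_0$. Then for all $s > s_0$ and $n \ge 0$: $\varphi(s^{2^n}) \le \frac{1}{\sqrt 2}\big(a_{n+1} s^{-q 2^{n+1}} + \varphi(s^{1/2})^{2^{n+1}}\big)$, where $a_1 = 1$, $a_{n+1} = a_n^2 + 1$. Consequently, for all $x > s$ (with $s = s_0 + Q^{1/q}$), $\varphi(x) \le \frac{1}{\sqrt 2}(x^{-\alpha} + x^{-\beta})$ with $\alpha = q - \frac{\ln Q}{\ln s} > 0$ and $\beta = -\frac{\ln \varphi(s^{1/2})}{\ln s}$, provided $\varphi(s^{1/2}) < 1$. -/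
set_option maxHeartbeats 1000000 in
/-- Bootstrap of the recursive inequality
`φ(s) ≤ (1/√2)(s^{-2q} + φ(s^{1/2})²)` for `s > s₀`: by induction,
`φ(s^{2ⁿ}) ≤ (1/√2)(a_{n+1} s^{-q·2^{n+1}} + φ(s^{1/2})^{2^{n+1}})`, and
consequently polynomial decay `φ(x) ≤ (1/√2)(x^{-α} + x^{-β})` for `x > s`
with `s = s₀ + Q^{1/q}`, `α = q - ln Q/ln s > 0`, `β = -ln φ(s^{1/2})/ln s`. -/
theorem stmt17 (φ : ℝ → ℝ) (hpos : ∀ s, 0 < φ s) (hle1 : ∀ s, φ s ≤ 1)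
    (hmono : Antitone φ)
    (a : ℕ → ℝ) (ha1 : a 1 = 1) (harec : ∀ n, a (n + 1) = a n ^ 2 + 1)
    (s0 q Q : ℝ) (hs0 : 0 < s0) (hq : 0 < q) (hQ : (1 + Real.sqrt 5) / 2 ≤ Q)
    (hrec : ∀ s, s0 < s →
      φ s ≤ (1 / Real.sqrt 2) * (s ^ (-(2 * q)) + φ (s ^ ((1 : ℝ) / 2)) ^ 2)) :
    (∀ s, s0 < s → ∀ n : ℕ,
      φ (s ^ ((2 : ℝ) ^ n)) ≤ (1 / Real.sqrt 2) *
        (a (n + 1) * s ^ (-(q * 2 ^ (n + 1))) +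
          φ (s ^ ((1 : ℝ) / 2)) ^ 2 ^ (n + 1))) ∧
    (∀ s : ℝ, s = s0 + Q ^ (1 / q) →
      φ (s ^ ((1 : ℝ) / 2)) < 1 →
      0 < q - Real.log Q / Real.log s ∧
      ∀ x, s < x →
        φ x ≤ (1 / Real.sqrt 2) *
          (x ^ (-(q - Real.log Q / Real.log s)) +
            x ^ (Real.log (φ (s ^ ((1 : ℝ) / 2))) / Real.log s))) := by
  classical
  have hs2 : (0:ℝ) < Real.sqrt 2 := Real.sqrt_pos.mpr (by norm_num)
  have hs2sq : Real.sqrt 2 ^ 2 = 2 := Real.sq_sqrt (by norm_num)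
  have hs2one : (1:ℝ) ≤ Real.sqrt 2 := by nlinarith
  have hinv : (0:ℝ) < 1 / Real.sqrt 2 := by positivity
  have h5sq : Real.sqrt 5 ^ 2 = 5 := Real.sq_sqrt (by norm_num)
  have h5 : (2:ℝ) ≤ Real.sqrt 5 := by nlinarith [Real.sqrt_nonneg 5]
  have hQ1 : (1:ℝ) ≤ Q := by linarith
  have hQ0 : (0:ℝ) < Q := by linarith
  have hQsq : Q + 1 ≤ Q ^ 2 := by
    nlinarith [sq_nonneg (Q - (1 + Real.sqrt 5) / 2),
      mul_nonneg (Real.sqrt_nonneg 5) (sub_nonneg.2 hQ)]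
  have ha_ge1 : ∀ n, 1 ≤ a (n + 1) := by
    intro n
    induction n with
    | zero => rw [ha1]
    | succ k ih => rw [harec]; nlinarith
  have ha_leQ : ∀ n : ℕ, a (n + 1) ≤ Q ^ (2 ^ (n + 1) - 1) := by
    intro n
    induction n with
    | zero => simpa [ha1] using hQ1
    | succ k ih =>
      have hm : 1 ≤ 2 ^ (k + 1) := Nat.one_le_two_pow
      have hm2 : 4 ≤ 2 ^ (k + 2) := by
        have h1 : 1 ≤ 2 ^ k := Nat.one_le_two_pow
        have : 2 ^ (k + 2) = 4 * 2 ^ k := by ring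
        omega
      have h1 : a (k + 1) ^ 2 ≤ (Q ^ (2 ^ (k + 1) - 1)) ^ 2 :=
        pow_le_pow_left₀ (by linarith [ha_ge1 k]) ih 2
      have h2 : (Q ^ (2 ^ (k + 1) - 1)) ^ 2 = Q ^ (2 ^ (k + 2) - 2) := by
        rw [← pow_mul]
        congr 1
        have : 2 ^ (k + 2) = 2 * 2 ^ (k + 1) := by ring
        omega
      have hQpow : Q ≤ Q ^ (2 ^ (k + 2) - 2) := by
        calc Q = Q ^ 1 := (pow_one Q).symm
        _ ≤ Q ^ (2 ^ (k + 2) - 2) := pow_le_pow_right₀ hQ1 (by omega)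
      have e : Q ^ (2 ^ (k + 2) - 1) = Q ^ (2 ^ (k + 2) - 2) * Q := by
        rw [← pow_succ]
        congr 1
        omega
      have key : Q * (Q - 1) ≤ Q ^ (2 ^ (k + 2) - 2) * (Q - 1) :=
        mul_le_mul_of_nonneg_right hQpow (by linarith)
      have step : Q ^ (2 ^ (k + 2) - 2) + 1 ≤ Q ^ (2 ^ (k + 2) - 1) := by
        rw [e]; nlinarith
      calc a (k + 2) = a (k + 1) ^ 2 + 1 := harec (k + 1)
      _ ≤ Q ^ (2 ^ (k + 2) - 2) + 1 := by rw [← h2]; linarith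
      _ ≤ Q ^ (2 ^ (k + 2) - 1) := step
  have part1 : ∀ s, s0 < s → ∀ n : ℕ,
      φ (s ^ ((2 : ℝ) ^ n)) ≤ (1 / Real.sqrt 2) *
        (a (n + 1) * s ^ (-(q * 2 ^ (n + 1))) +
          φ (s ^ ((1 : ℝ) / 2)) ^ 2 ^ (n + 1)) := by
    intro s hs
    have hsp : (0:ℝ) < s := lt_trans hs0 hs
    intro n
    induction n with
    | zero =>
      simpa [pow_zero, pow_one, Real.rpow_one, ha1, one_mul, mul_comm q 2] using hrec s hs
    | succ k ih =>
      by_cases hS : s0 < s ^ ((2:ℝ) ^ (k + 1))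
      · set S := s ^ ((2:ℝ) ^ (k + 1)) with hSdef
        set A := a (k + 1) * s ^ (-(q * 2 ^ (k + 1))) with hAdef
        set B := φ (s ^ ((1:ℝ) / 2)) ^ 2 ^ (k + 1) with hBdef
        have h := hrec S hS
        have e1 : S ^ ((1:ℝ) / 2) = s ^ ((2:ℝ) ^ k) := by
          rw [hSdef, ← Real.rpow_mul hsp.le]
          congr 1
          ring
        have e2 : S ^ (-(2 * q)) = s ^ (-(q * 2 ^ (k + 1 + 1))) := by
          rw [hSdef, ← Real.rpow_mul hsp.le]
          congr 1
          ring
        have hsq : φ (s ^ ((2:ℝ) ^ k)) ^ 2 ≤ A ^ 2 + B ^ 2 := by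
          have h1 : φ (s ^ ((2:ℝ) ^ k)) ^ 2 ≤ ((1 / Real.sqrt 2) * (A + B)) ^ 2 :=
            pow_le_pow_left₀ (hpos _).le ih 2
          have h3 : ((1:ℝ) / Real.sqrt 2) ^ 2 = 1 / 2 := by
            rw [div_pow, one_pow, hs2sq]
          rw [mul_pow, h3] at h1
          nlinarith [sq_nonneg (A - B)]
        have eA : A ^ 2 = a (k + 1) ^ 2 * s ^ (-(q * 2 ^ (k + 1 + 1))) := by
          rw [hAdef, mul_pow]
          congr 1
          rw [← Real.rpow_natCast (s ^ (-(q * 2 ^ (k + 1)))) 2, ← Real.rpow_mul hsp.le]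
          congr 1
          push_cast
          ring
        have eB : B ^ 2 = φ (s ^ ((1:ℝ) / 2)) ^ 2 ^ (k + 1 + 1) := by
          rw [hBdef, ← pow_mul, ← pow_succ]
        calc φ S ≤ (1 / Real.sqrt 2) * (S ^ (-(2 * q)) + φ (S ^ ((1:ℝ) / 2)) ^ 2) := h
        _ = (1 / Real.sqrt 2) * (s ^ (-(q * 2 ^ (k + 1 + 1))) + φ (s ^ ((2:ℝ) ^ k)) ^ 2) := by
            rw [e1, e2]
        _ ≤ (1 / Real.sqrt 2) * (s ^ (-(q * 2 ^ (k + 1 + 1))) + (A ^ 2 + B ^ 2)) := by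
            apply mul_le_mul_of_nonneg_left _ hinv.le
            linarith
        _ = (1 / Real.sqrt 2) *
            (a (k + 1 + 1) * s ^ (-(q * 2 ^ (k + 1 + 1))) +
              φ (s ^ ((1:ℝ) / 2)) ^ 2 ^ (k + 1 + 1)) := by
            rw [harec, eA, eB]; ring
      · -- degenerate case : s < 1, RHS ≥ 1
        have hs1 : s < 1 := by
          by_contra hcon
          push_neg at hcon
          have h1 : (1:ℝ) ≤ (2:ℝ) ^ (k + 1) := by
            exact_mod_cast Nat.one_le_two_pow (n := k + 1)
          have h2 : s ≤ s ^ ((2:ℝ) ^ (k + 1)) := by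
            calc s = s ^ (1:ℝ) := (Real.rpow_one s).symm
            _ ≤ s ^ ((2:ℝ) ^ (k + 1)) := Real.rpow_le_rpow_of_exponent_le hcon h1
          push_neg at hS
          linarith
        have hbig : (1:ℝ) ≤ s ^ (-(q * 2 ^ (k + 1 + 1))) := by
          apply Real.one_le_rpow_of_pos_of_le_one_of_nonpos hsp hs1.le
          have : (0:ℝ) < q * 2 ^ (k + 1 + 1) := by positivity
          linarith
        have ha2 : 2 ≤ a (k + 1 + 1) := by
          rw [harec]; nlinarith [ha_ge1 k]
        have hBpos : 0 ≤ φ (s ^ ((1:ℝ) / 2)) ^ 2 ^ (k + 1 + 1) :=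
          pow_nonneg (hpos _).le _
        have hX : Real.sqrt 2 ≤ a (k + 1 + 1) * s ^ (-(q * 2 ^ (k + 1 + 1))) +
            φ (s ^ ((1:ℝ) / 2)) ^ 2 ^ (k + 1 + 1) := by
          have h1 : (2:ℝ) ≤ a (k + 1 + 1) * s ^ (-(q * 2 ^ (k + 1 + 1))) := by
            calc (2:ℝ) = 2 * 1 := by ring
            _ ≤ a (k + 1 + 1) * s ^ (-(q * 2 ^ (k + 1 + 1))) :=
              mul_le_mul ha2 hbig (by norm_num) (by linarith)
          have h2le : Real.sqrt 2 ≤ 2 := by nlinarith [hs2one, hs2sq]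
          linarith
        have hRHS : (1:ℝ) ≤ (1 / Real.sqrt 2) *
            (a (k + 1 + 1) * s ^ (-(q * 2 ^ (k + 1 + 1))) +
              φ (s ^ ((1:ℝ) / 2)) ^ 2 ^ (k + 1 + 1)) := by
          rw [one_div, inv_mul_eq_div, le_div_iff₀ hs2, one_mul]
          exact hX
        exact le_trans (hle1 _) hRHS
  refine ⟨part1, ?_⟩
  intro s hs_eq hP1
  have hQr1 : 1 < Q ^ ((1:ℝ) / q) := by
    rw [Real.one_lt_rpow_iff_of_pos hQ0]
    exact Or.inl ⟨by linarith, by positivity⟩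
  have hsgt : s0 < s := by rw [hs_eq]; linarith
  have hs1 : 1 < s := by rw [hs_eq]; linarith
  have hspos : (0:ℝ) < s := by linarith
  have hL : 0 < Real.log s := Real.log_pos hs1
  have hQs : Q < s ^ q := by
    have h1 : Q ^ ((1:ℝ) / q) < s := by rw [hs_eq]; linarith
    have h2 : (Q ^ ((1:ℝ) / q)) ^ q < s ^ q :=
      Real.rpow_lt_rpow (Real.rpow_nonneg hQ0.le _) h1 hq
    rwa [← Real.rpow_mul hQ0.le, one_div, inv_mul_cancel₀ hq.ne', Real.rpow_one] at h2
  have halpha : 0 < q - Real.log Q / Real.log s := by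
    have hlog : Real.log Q < q * Real.log s := by
      calc Real.log Q < Real.log (s ^ q) := Real.log_lt_log hQ0 hQs
      _ = q * Real.log s := Real.log_rpow hspos q
    have : Real.log Q / Real.log s < q := (div_lt_iff₀ hL).mpr (by linarith)
    linarith
  refine ⟨halpha, ?_⟩
  intro x hx
  have hxpos : 0 < x := lt_trans (lt_trans zero_lt_one hs1) hx
  have hex : ∃ k : ℕ, x < s ^ ((2:ℝ) ^ (k + 1)) := by
    obtain ⟨m, hm⟩ := pow_unbounded_of_one_lt x hs1
    refine ⟨m, ?_⟩
    have hmle : m ≤ 2 ^ (m + 1) := by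
      have := Nat.lt_two_pow_self (n := m)
      have h2 : (2:ℕ) ^ m ≤ 2 ^ (m + 1) := Nat.pow_le_pow_right (by norm_num) (Nat.le_succ m)
      omega
    calc x < s ^ m := hm
    _ ≤ s ^ (2 ^ (m + 1) : ℕ) := pow_le_pow_right₀ hs1.le hmle
    _ = s ^ ((2:ℝ) ^ (m + 1)) := by
        rw [← Real.rpow_natCast s (2 ^ (m + 1))]
        congr 1
        push_cast
        ring
  obtain ⟨n, hn2, hn1⟩ : ∃ n : ℕ, x < s ^ ((2:ℝ) ^ (n + 1)) ∧ s ^ ((2:ℝ) ^ n) ≤ x := by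
    refine ⟨Nat.find hex, Nat.find_spec hex, ?_⟩
    rcases Nat.eq_zero_or_pos (Nat.find hex) with h0 | hp
    · rw [h0, pow_zero, Real.rpow_one]; exact hx.le
    · have hk := Nat.find_min hex (Nat.sub_lt hp one_pos)
      push_neg at hk
      have he1 : Nat.find hex - 1 + 1 = Nat.find hex := by omega
      rwa [he1] at hk
  have h1 := part1 s hsgt n
  have hφx : φ x ≤ φ (s ^ ((2:ℝ) ^ n)) := hmono hn1
  set P0 := φ (s ^ ((1:ℝ) / 2)) with hP0def
  have hP0pos : 0 < P0 := hpos _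
  set α := q - Real.log Q / Real.log s with hα
  have hT1 : a (n + 1) * s ^ (-(q * 2 ^ (n + 1))) ≤ x ^ (-α) := by
    have haQ : a (n + 1) ≤ Q ^ (2 ^ (n + 1) : ℕ) :=
      le_trans (ha_leQ n) (pow_le_pow_right₀ hQ1 (Nat.sub_le _ _))
    have hSx : (s ^ ((2:ℝ) ^ (n + 1))) ^ (-α) ≤ x ^ (-α) :=
      Real.rpow_le_rpow_of_nonpos hxpos hn2.le (by linarith)
    have hEq : (s ^ ((2:ℝ) ^ (n + 1))) ^ (-α) =
        Q ^ (2 ^ (n + 1) : ℕ) * s ^ (-(q * 2 ^ (n + 1))) := by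
      rw [← Real.rpow_mul hspos.le, Real.rpow_def_of_pos hspos,
        Real.rpow_def_of_pos hspos, ← Real.rpow_natCast Q (2 ^ (n + 1)),
        Real.rpow_def_of_pos hQ0, ← Real.exp_add]
      congr 1
      rw [hα]
      push_cast
      field_simp
      ring
    calc a (n + 1) * s ^ (-(q * 2 ^ (n + 1)))
        ≤ Q ^ (2 ^ (n + 1) : ℕ) * s ^ (-(q * 2 ^ (n + 1))) :=
          mul_le_mul_of_nonneg_right haQ (Real.rpow_nonneg hspos.le _)
    _ = (s ^ ((2:ℝ) ^ (n + 1))) ^ (-α) := hEq.symm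
    _ ≤ x ^ (-α) := hSx
  have hT2 : P0 ^ (2 ^ (n + 1) : ℕ) ≤ x ^ (Real.log P0 / Real.log s) := by
    have he : Real.log P0 / Real.log s ≤ 0 :=
      le_of_lt (div_neg_of_neg_of_pos (Real.log_neg hP0pos hP1) hL)
    have hSx : (s ^ ((2:ℝ) ^ (n + 1))) ^ (Real.log P0 / Real.log s) ≤
        x ^ (Real.log P0 / Real.log s) :=
      Real.rpow_le_rpow_of_nonpos hxpos hn2.le he
    have hEq : (s ^ ((2:ℝ) ^ (n + 1))) ^ (Real.log P0 / Real.log s) =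
        P0 ^ (2 ^ (n + 1) : ℕ) := by
      rw [← Real.rpow_mul hspos.le, ← Real.rpow_natCast P0 (2 ^ (n + 1)),
        Real.rpow_def_of_pos hspos, Real.rpow_def_of_pos hP0pos]
      congr 1
      push_cast
      field_simp
    calc P0 ^ (2 ^ (n + 1) : ℕ) = _ := hEq.symm
    _ ≤ x ^ (Real.log P0 / Real.log s) := hSx
  calc φ x ≤ φ (s ^ ((2:ℝ) ^ n)) := hφx
  _ ≤ (1 / Real.sqrt 2) * (a (n + 1) * s ^ (-(q * 2 ^ (n + 1))) + P0 ^ 2 ^ (n + 1)) := h1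
  _ ≤ (1 / Real.sqrt 2) * (x ^ (-α) + x ^ (Real.log P0 / Real.log s)) := by
      apply mul_le_mul_of_nonneg_left _ hinv.le
      exact add_le_add hT1 hT2
end
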